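/- Let f : ℝ → ℝ be infinitely differentiable with f(y) = 0 for all y ≥ 0 and f(y) > 0 for all y < 0, and define ζ : ℝ² → ℝ by ζ(y,z) = z²y² + z⁴ + f(y). Then there is no continuously differentiable (C¹) function u : ℝ² → ℝ such that u(y,z)² = ζ(y,z) for all (y,z) ∈ ℝ². In other words, the nonnegative smooth function ζ admits no C¹ square root on ℝ². -/

import Mathlib

open Set Filter Topology

set_option maxHeartbeats 1000000

/-- A continuous function without zeros on `[a,b]` has the same sign at both endpoints. -/
lemma aux_same_sign_of_no_zero {g : ℝ → ℝ} {a b : ℝ} (hab : a ≤ b)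
    (hg : ContinuousOn g (Set.Icc a b))
    (hnz : ∀ x ∈ Set.Icc a b, g x ≠ 0) : 0 < g a * g b := by
  have ha : a ∈ Set.Icc a b := ⟨le_refl a, hab⟩
  have hb : b ∈ Set.Icc a b := ⟨hab, le_refl b⟩
  rcases lt_or_gt_of_ne (hnz a ha) with h1 | h1 <;>
    rcases lt_or_gt_of_ne (hnz b hb) with h2 | h2
  · exact mul_pos_of_neg_of_neg h1 h2
  · exfalso
    obtain ⟨x, hx, hx0⟩ := intermediate_value_Icc hab hg ⟨h1.le, h2.le⟩
    exact hnz x hx hx0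
  · exfalso
    obtain ⟨x, hx, hx0⟩ := intermediate_value_Icc' hab hg ⟨h2.le, h1.le⟩
    exact hnz x hx hx0
  · exact mul_pos h1 h2

/-- The paper's example (Section 5): the nonnegative smooth function
`ζ(y,z) = z²y² + z⁴ + f(y)`, where `f` is smooth, vanishes on `[0,∞)` and is
positive on `(-∞,0)`, admits no C¹ square root on `ℝ²`. -/
theorem zeta_has_no_C1_sqrt (f : ℝ → ℝ) (hf : ContDiff ℝ (⊤ : ℕ∞) f)
    (hf0 : ∀ y : ℝ, 0 ≤ y → f y = 0) (hfpos : ∀ y : ℝ, y < 0 → 0 < f y)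
    (ζ : ℝ × ℝ → ℝ)
    (hζ : ∀ y z : ℝ, ζ (y, z) = z ^ 2 * y ^ 2 + z ^ 4 + f y) :
    ¬ ∃ u : ℝ × ℝ → ℝ, ContDiff ℝ 1 u ∧ ∀ p : ℝ × ℝ, (u p) ^ 2 = ζ p := by
  rintro ⟨u, hu1, hu2⟩
  have hfnn : ∀ y : ℝ, 0 ≤ f y := by
    intro y
    rcases le_or_gt 0 y with h | h
    · rw [hf0 y h]
    · exact (hfpos y h).le
  have hcont : Continuous u := hu1.continuous
  -- u is nonzero wherever z ≠ 0
  have hz_ne : ∀ y z : ℝ, z ≠ 0 → u (y, z) ≠ 0 := by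
    intro y z hz h0
    have h := hu2 (y, z)
    rw [hζ] at h
    have hz4 : 0 < z ^ 4 := by positivity
    have h1 : (0:ℝ) ≤ z ^ 2 * y ^ 2 := by positivity
    rw [h0] at h
    nlinarith [hfnn y]
  -- u is nonzero wherever y < 0
  have hy_ne : ∀ y z : ℝ, y < 0 → u (y, z) ≠ 0 := by
    intro y z hy h0
    have h := hu2 (y, z)
    rw [hζ, h0] at h
    have h1 : (0:ℝ) ≤ z ^ 2 * y ^ 2 := by positivity
    have h2 : (0:ℝ) ≤ z ^ 4 := by positivity
    nlinarith [hfpos y hy]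
  -- Sign chain around the ray {z = 0, y ≥ 0}
  have hseg1 : 0 < u (-1, 1) * u (1, 1) := by
    refine aux_same_sign_of_no_zero (by norm_num)
      ((hcont.comp (continuous_id.prodMk continuous_const)).continuousOn) ?_
    intro x _; exact hz_ne x 1 one_ne_zero
  have hseg2 : 0 < u (-1, -1) * u (-1, 1) := by
    refine aux_same_sign_of_no_zero (by norm_num)
      ((hcont.comp (continuous_const.prodMk continuous_id)).continuousOn) ?_
    intro x _; exact hy_ne (-1) x (by norm_num)
  have hseg3 : 0 < u (-1, -1) * u (1, -1) := by
    refine aux_same_sign_of_no_zero (by norm_num)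
      ((hcont.comp (continuous_id.prodMk continuous_const)).continuousOn) ?_
    intro x _; exact hz_ne x (-1) (by norm_num)
  have hkey : 0 < u (1, 1) * u (1, -1) := by
    nlinarith [mul_pos (mul_pos hseg1 hseg2) hseg3,
      sq_nonneg (u (-1, 1) * u (-1, -1)), sq_nonneg (u (-1,1)), sq_nonneg (u (-1,-1))]
  set s : ℝ := u (1, 1) with hs_def
  have hs : s ≠ 0 := hz_ne 1 1 one_ne_zero
  -- sign of u(1,z) for z ∈ (0,1]
  have hsigR : ∀ z ∈ Ioc (0:ℝ) 1, 0 < s * u (1, z) := by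
    intro z hz
    have := aux_same_sign_of_no_zero hz.2
      ((hcont.comp (continuous_const.prodMk continuous_id)).continuousOn)
      (fun x hx => hz_ne 1 x (by rcases hx with ⟨h1, _⟩; linarith [hz.1]))
    have h' : 0 < u (1, z) * u (1, 1) := by simpa using this
    nlinarith [h']
  -- sign of u(1,z) for z ∈ [-1,0)
  have hsigL : ∀ z ∈ Ico (-1:ℝ) 0, 0 < s * u (1, z) := by
    intro z hz
    have h := aux_same_sign_of_no_zero hz.1
      ((hcont.comp (continuous_const.prodMk continuous_id)).continuousOn)
      (fun x hx => hz_ne 1 x (by rcases hx with ⟨_, h2⟩; linarith [hz.2]))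
    have h' : 0 < u (1, -1) * u (1, z) := by simpa using h
    nlinarith [mul_pos hkey h', sq_nonneg (u (1,-1))]
  -- The function g z = u(1,z)
  set g : ℝ → ℝ := fun z => u (1, z) with hg_def
  have hud : Differentiable ℝ u := hu1.differentiable one_ne_zero
  have hgd : Differentiable ℝ g :=
    hud.comp ((differentiable_const (1:ℝ)).prodMk differentiable_id)
  have hg0 : g 0 = 0 := by
    have h := hu2 (1, 0)
    rw [hζ] at h
    have : g 0 ^ 2 = 0 := by
      simpa [hg_def, hf0 1 (by norm_num)] using h
    exact sq_eq_zero_iff.mp this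
  -- (g z)^2 = z^2 + z^4
  have hgsq : ∀ z : ℝ, (g z) ^ 2 = z ^ 2 + z ^ 4 := by
    intro z
    have h := hu2 (1, z)
    rw [hζ] at h
    simpa [hg_def, hf0 1 (by norm_num)] using h
  set d : ℝ := deriv g 0 with hd_def
  have hder : HasDerivAt (fun z => s * g z) (s * d) 0 := ((hgd 0).hasDerivAt).const_mul s
  have hslope := hasDerivAt_iff_tendsto_slope.mp hder
  have slope_eq : ∀ z : ℝ, z ≠ 0 → slope (fun z => s * g z) 0 z = s * g z / z := by
    intro z hz
    rw [slope_def_field]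
    rw [hg0]
    ring_nf
  -- right limit: |s|
  have hsR : s * d = |s| := by
    have hR : Tendsto (slope (fun z => s * g z) 0) (𝓝[>] 0) (𝓝 (s * d)) :=
      hslope.mono_left (nhdsWithin_mono 0 (fun x hx => hx.ne'))
    have hc : Tendsto (fun z : ℝ => |s| * Real.sqrt (1 + z ^ 2)) (𝓝[>] 0)
        (𝓝 (|s| * Real.sqrt (1 + 0 ^ 2))) :=
      (Continuous.tendsto (continuous_const.mul (Real.continuous_sqrt.comp (continuous_const.add (continuous_pow 2)))) 0).mono_left nhdsWithin_le_nhds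
    have hval : (|s| * Real.sqrt (1 + (0:ℝ) ^ 2)) = |s| := by
      norm_num
    rw [hval] at hc
    refine tendsto_nhds_unique hR (hc.congr' ?_)
    filter_upwards [Ioo_mem_nhdsGT_of_mem (by norm_num : (0:ℝ) ∈ Ico (0:ℝ) 1)] with z hz
    have hz0 : 0 < z := hz.1
    have hpos : 0 < s * g z := hsigR z ⟨hz.1, hz.2.le⟩
    have hsqrt_nn : (0:ℝ) ≤ 1 + z ^ 2 := by positivity
    have hb : 0 < |s| * (z * Real.sqrt (1 + z ^ 2)) := by
      have : 0 < Real.sqrt (1 + z ^ 2) := Real.sqrt_pos.mpr (by positivity)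
      positivity
    have hsqeq : (s * g z) ^ 2 = (|s| * (z * Real.sqrt (1 + z ^ 2))) ^ 2 := by
      have h1 : Real.sqrt (1 + z ^ 2) ^ 2 = 1 + z ^ 2 := Real.sq_sqrt hsqrt_nn
      have h2 := hgsq z
      have h3 : |s| ^ 2 = s ^ 2 := sq_abs s
      calc (s * g z) ^ 2 = s ^ 2 * (g z) ^ 2 := by ring
        _ = s ^ 2 * (z ^ 2 + z ^ 4) := by rw [h2]
        _ = (|s| * (z * Real.sqrt (1 + z ^ 2))) ^ 2 := by
            rw [mul_pow, mul_pow, h3, h1]; ring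
    have heq : s * g z = |s| * (z * Real.sqrt (1 + z ^ 2)) := by
      rcases sq_eq_sq_iff_eq_or_eq_neg.mp hsqeq with h | h
      · exact h
      · exfalso; nlinarith
    rw [slope_eq z hz0.ne', heq, eq_comm, div_eq_iff hz0.ne']
    ring
  -- left limit: -|s|
  have hsL : s * d = -|s| := by
    have hL : Tendsto (slope (fun z => s * g z) 0) (𝓝[<] 0) (𝓝 (s * d)) :=
      hslope.mono_left (nhdsWithin_mono 0 (fun x hx => hx.ne))
    have hc : Tendsto (fun z : ℝ => -(|s| * Real.sqrt (1 + z ^ 2))) (𝓝[<] 0)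
        (𝓝 (-(|s| * Real.sqrt (1 + 0 ^ 2)))) :=
      (Continuous.tendsto (Continuous.neg (continuous_const.mul (Real.continuous_sqrt.comp (continuous_const.add (continuous_pow 2))))) 0).mono_left nhdsWithin_le_nhds
    have hval : -(|s| * Real.sqrt (1 + (0:ℝ) ^ 2)) = -|s| := by
      norm_num
    rw [hval] at hc
    refine tendsto_nhds_unique hL (hc.congr' ?_)
    filter_upwards [Ioo_mem_nhdsLT_of_mem (by norm_num : (0:ℝ) ∈ Ioc (-1:ℝ) 0)] with z hz
    have hz0 : z < 0 := hz.2
    have hpos : 0 < s * g z := hsigL z ⟨hz.1.le, hz.2⟩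
    have hsqrt_nn : (0:ℝ) ≤ 1 + z ^ 2 := by positivity
    have hb : 0 < |s| * (-z * Real.sqrt (1 + z ^ 2)) := by
      have : 0 < Real.sqrt (1 + z ^ 2) := Real.sqrt_pos.mpr (by positivity)
      have hnz : 0 < -z := by linarith
      positivity
    have hsqeq : (s * g z) ^ 2 = (|s| * (-z * Real.sqrt (1 + z ^ 2))) ^ 2 := by
      have h1 : Real.sqrt (1 + z ^ 2) ^ 2 = 1 + z ^ 2 := Real.sq_sqrt hsqrt_nn
      have h2 := hgsq z
      have h3 : |s| ^ 2 = s ^ 2 := sq_abs s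
      calc (s * g z) ^ 2 = s ^ 2 * (g z) ^ 2 := by ring
        _ = s ^ 2 * (z ^ 2 + z ^ 4) := by rw [h2]
        _ = (|s| * (-z * Real.sqrt (1 + z ^ 2))) ^ 2 := by
            rw [mul_pow, mul_pow, h3, h1]; ring
    have heq : s * g z = |s| * (-z * Real.sqrt (1 + z ^ 2)) := by
      rcases sq_eq_sq_iff_eq_or_eq_neg.mp hsqeq with h | h
      · exact h
      · exfalso; nlinarith
    rw [slope_eq z hz0.ne, heq, eq_comm, div_eq_iff hz0.ne]
    ring
  have : |s| = 0 := by linarith [hsR, hsL.symm.trans hsR]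
  exact hs (abs_eq_zero.mp this)
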